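/- Suppose β ∈ ℝ^p is s-sparse with support I, let B = β ⊗ β, and let w_β = β/‖β‖₂ + s^{-1/2}·sign(β). Then the matrix W_β = w_β ⊗ w_β is a subgradient of the mixed atomic norm at B; i.e., ⟨W_β β, β⟩ = θ_s(β, β) and ⟨W_β u, v⟩ ≤ θ_s(u, v) for all u, v ∈ ℝ^p, hence W_β ∈ ∂‖B‖_{Γ_s}. -/

import Mathlib

open MeasureTheory ProbabilityTheory Finset

noncomputable section

/-- Vectors in ℝ^p. -/
abbrev Vec (p : ℕ) := Fin p → ℝ

/-- p × p real matrices. -/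
abbrev Mat (p : ℕ) := Matrix (Fin p) (Fin p) ℝ

/-- Euclidean (ℓ2) norm. -/
def l2 {p : ℕ} (u : Vec p) : ℝ := Real.sqrt (∑ i, (u i) ^ 2)

/-- ℓ1 norm. -/
def l1 {p : ℕ} (u : Vec p) : ℝ := ∑ i, |u i|

/-- Euclidean inner product. -/
def dotp {p : ℕ} (u v : Vec p) : ℝ := ∑ i, u i * v i

/-- θ_s(u,v) = (‖u‖₂ + s^{-1/2}‖u‖₁)(‖v‖₂ + s^{-1/2}‖v‖₁). -/
def theta {p : ℕ} (s : ℝ) (u v : Vec p) : ℝ :=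
  (l2 u + (Real.sqrt s)⁻¹ * l1 u) * (l2 v + (Real.sqrt s)⁻¹ * l1 v)

/-- Frobenius (Hilbert–Schmidt) inner product. -/
def frob {p : ℕ} (A B : Mat p) : ℝ := ∑ i, ∑ j, A i j * B i j

/-- Frobenius norm. -/
def frobNorm {p : ℕ} (A : Mat p) : ℝ := Real.sqrt (frob A A)

/-- The mixed atomic norm ‖B‖_{Γ_s}. -/
def mixedNorm {p : ℕ} (s : ℝ) (B : Mat p) : ℝ :=
  sInf { t | ∃ (K : ℕ) (u v : Fin K → Vec p),
    B = ∑ k, Matrix.vecMulVec (u k) (v k) ∧ t = ∑ k, theta s (u k) (v k) }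

/-- Dual norm of the mixed atomic norm. -/
def dualMixedNorm {p : ℕ} (s : ℝ) (Z : Mat p) : ℝ :=
  sSup { t | ∃ B : Mat p, mixedNorm s B ≤ 1 ∧ t = frob Z B }

/-- A vector is `s`-sparse if it has at most `s` nonzero entries. -/
def IsSparse {p : ℕ} (s : ℕ) (u : Vec p) : Prop := {i | u i ≠ 0}.ncard ≤ s

/-- Nuclear norm of a real matrix: the sum of its singular values. -/
def nuclearNorm {p : ℕ} (A : Mat p) : ℝ :=
  ∑ i, Real.sqrt ((show (Matrix.transpose A * A).IsHermitian by
    simpa [Matrix.conjTranspose_eq_transpose_of_trivial] using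
      Matrix.isHermitian_conjTranspose_mul_self A).eigenvalues i)

/-- Operator (spectral) norm of a real matrix. -/
def opNorm {p : ℕ} (A : Mat p) : ℝ :=
  sSup { t | ∃ u v : Vec p, l2 u ≤ 1 ∧ l2 v ≤ 1 ∧ t = dotp (A.mulVec u) v }

/-- `X` has sub-Gaussian (ψ₂) norm at most `K`: `E exp(X²/K²) ≤ 2`. -/
def HasSubgaussianNorm {Ω : Type*} [MeasurableSpace Ω] (μ : Measure Ω) (X : Ω → ℝ) (K : ℝ) :
    Prop := ∫ ω, Real.exp ((X ω) ^ 2 / K ^ 2) ∂μ ≤ 2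

/-- `W` is a subgradient of the mixed atomic norm `‖·‖_{Γ_s}` at `B`. -/
def InSubdiff {p : ℕ} (s : ℝ) (W B : Mat p) : Prop :=
  ∀ C : Mat p, mixedNorm s B + frob W (C - B) ≤ mixedNorm s C

section Aux

variable {p : ℕ}

lemma l2_nonneg (u : Vec p) : 0 ≤ l2 u := Real.sqrt_nonneg _

lemma l1_nonneg (u : Vec p) : 0 ≤ l1 u := Finset.sum_nonneg fun i _ => abs_nonneg _

lemma cs_abs (β u : Vec p) : ∑ i, |β i| * |u i| ≤ l2 β * l2 u := by
  have h := Finset.sum_mul_sq_le_sq_mul_sq Finset.univ (fun i => |β i|) (fun i => |u i|)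
  have hnn : 0 ≤ ∑ i, |β i| * |u i| :=
    Finset.sum_nonneg fun i _ => mul_nonneg (abs_nonneg _) (abs_nonneg _)
  have : ∑ i, |β i| * |u i| = Real.sqrt ((∑ i, |β i| * |u i|) ^ 2) :=
    (Real.sqrt_sq hnn).symm
  rw [this, l2, l2, ← Real.sqrt_mul (Finset.sum_nonneg fun i _ => sq_nonneg _)]
  apply Real.sqrt_le_sqrt
  simpa [sq_abs] using h

lemma l2_pos {β : Vec p} (hβ0 : β ≠ 0) : 0 < l2 β := by
  have : ∃ i, β i ≠ 0 := by
    by_contra h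
    push_neg at h
    exact hβ0 (funext h)
  obtain ⟨i, hi⟩ := this
  have h1 : 0 < ∑ j, (β j) ^ 2 := by
    apply Finset.sum_pos' (fun j _ => sq_nonneg _)
    exact ⟨i, Finset.mem_univ i, by positivity⟩
  exact Real.sqrt_pos.mpr h1

lemma sum_sq_eq (β : Vec p) : ∑ i, (β i) ^ 2 = l2 β * l2 β := by
  rw [l2, Real.mul_self_sqrt (Finset.sum_nonneg fun i _ => sq_nonneg _)]

end Aux

/-- `w_β ⊗ w_β` is a subgradient of the mixed atomic norm at `β ⊗ β`. -/
theorem wbeta_outer_is_subgradient {p s : ℕ} (hs : 0 < s) (β : Vec p)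
    (hβ : IsSparse s β) (hβ0 : β ≠ 0) :
    let w : Vec p := fun i => β i / l2 β + (Real.sqrt (s : ℝ))⁻¹ * Real.sign (β i)
    let W : Mat p := Matrix.vecMulVec w w
    dotp (W.mulVec β) β = theta (s : ℝ) β β ∧
    (∀ u v : Vec p, dotp (W.mulVec u) v ≤ theta (s : ℝ) u v) ∧
    InSubdiff (s : ℝ) W (Matrix.vecMulVec β β) := by
  intro w W
  set c : ℝ := (Real.sqrt (s : ℝ))⁻¹ with hc
  have hc0 : 0 ≤ c := inv_nonneg.mpr (Real.sqrt_nonneg _)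
  have hl2 : 0 < l2 β := l2_pos hβ0
  -- key inner products
  have hdotβ : ∑ i, w i * β i = l2 β + c * l1 β := by
    have : ∀ i, w i * β i = (β i)^2 / l2 β + c * |β i| := by
      intro i
      show (β i / l2 β + c * Real.sign (β i)) * β i = _
      have hsign : Real.sign (β i) * β i = |β i| := by
        rcases lt_trichotomy (β i) 0 with h | h | h
        · rw [Real.sign_of_neg h, abs_of_neg h]; ring
        · simp [h]
        · rw [Real.sign_of_pos h, abs_of_pos h]; ring
      rw [← hsign]
      ring
    rw [Finset.sum_congr rfl (fun i _ => this i), Finset.sum_add_distrib]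
    congr 1
    · rw [← Finset.sum_div, sum_sq_eq]
      field_simp
    · rw [l1, Finset.mul_sum]
  have habs : ∀ u : Vec p, |∑ i, w i * u i| ≤ l2 u + c * l1 u := by
    intro u
    calc |∑ i, w i * u i| ≤ ∑ i, |w i * u i| := Finset.abs_sum_le_sum_abs _ _
      _ ≤ ∑ i, (|β i| * |u i| / l2 β + c * |u i|) := by
          apply Finset.sum_le_sum
          intro i _
          rw [abs_mul]
          have hw : |w i| ≤ |β i| / l2 β + c := by
            calc |w i| ≤ |β i / l2 β| + |c * Real.sign (β i)| := abs_add_le _ _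
              _ ≤ |β i| / l2 β + c := by
                  rw [abs_div, abs_of_pos hl2, abs_mul, abs_of_nonneg hc0]
                  have : |Real.sign (β i)| ≤ 1 := by
                    rcases Real.sign_apply_eq (β i) with h | h | h <;> simp [h]
                  nlinarith [abs_nonneg (β i)]
          calc |w i| * |u i| ≤ (|β i| / l2 β + c) * |u i| :=
                mul_le_mul_of_nonneg_right hw (abs_nonneg _)
            _ = |β i| * |u i| / l2 β + c * |u i| := by ring
      _ ≤ l2 u + c * l1 u := by
          rw [Finset.sum_add_distrib, ← Finset.sum_div, ← Finset.mul_sum, ← l1]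
          have := cs_abs β u
          have h2 : (∑ i, |β i| * |u i|) / l2 β ≤ l2 u := by
            rw [div_le_iff₀ hl2]
            nlinarith
          linarith
  have hθnn : ∀ u : Vec p, 0 ≤ l2 u + c * l1 u := fun u =>
    add_nonneg (l2_nonneg u) (mul_nonneg hc0 (l1_nonneg u))
  have hkey : ∀ u v : Vec p, (∑ i, w i * u i) * (∑ i, w i * v i) ≤ theta (s : ℝ) u v := by
    intro u v
    calc (∑ i, w i * u i) * (∑ i, w i * v i) ≤ |∑ i, w i * u i| * |∑ i, w i * v i| := by
          rw [← abs_mul]; exact le_abs_self _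
      _ ≤ (l2 u + c * l1 u) * (l2 v + c * l1 v) :=
          mul_le_mul (habs u) (habs v) (abs_nonneg _) (hθnn u)
      _ = theta (s : ℝ) u v := rfl
  -- dotp formula
  have hdot : ∀ u v : Vec p, dotp (W.mulVec u) v = (∑ i, w i * u i) * (∑ i, w i * v i) := by
    intro u v
    rw [Finset.sum_mul_sum]
    simp only [dotp, Matrix.mulVec, dotProduct, W, Matrix.vecMulVec_apply]
    simp_rw [Finset.sum_mul]
    rw [Finset.sum_comm]
    exact Finset.sum_congr rfl fun i _ => Finset.sum_congr rfl fun j _ => by ring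
  -- frob formula on rank-one matrices
  have hfrob1 : ∀ u v : Vec p, frob W (Matrix.vecMulVec u v)
      = (∑ i, w i * u i) * (∑ i, w i * v i) := by
    intro u v
    rw [Finset.sum_mul_sum]
    simp only [frob, W, Matrix.vecMulVec_apply]
    exact Finset.sum_congr rfl fun i _ => Finset.sum_congr rfl fun j _ => by ring
  have hfrob_sum : ∀ {K : ℕ} (u v : Fin K → Vec p),
      frob W (∑ k, Matrix.vecMulVec (u k) (v k))
        = ∑ k, (∑ i, w i * u k i) * (∑ i, w i * v k i) := by
    intro K u v
    have h1 : frob W (∑ k, Matrix.vecMulVec (u k) (v k))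
        = ∑ k, frob W (Matrix.vecMulVec (u k) (v k)) := by
      simp only [frob, Matrix.sum_apply, Finset.mul_sum]
      refine Eq.trans (Finset.sum_congr rfl fun i _ => Finset.sum_comm) ?_
      exact Finset.sum_comm
    rw [h1]
    exact Finset.sum_congr rfl fun k _ => hfrob1 (u k) (v k)
  -- lower bound: frob W C ≤ any element of mixedNorm set
  have hlow : ∀ (C : Mat p) (t : ℝ), (∃ (K : ℕ) (u v : Fin K → Vec p),
      C = ∑ k, Matrix.vecMulVec (u k) (v k) ∧ t = ∑ k, theta (s : ℝ) (u k) (v k)) →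
      frob W C ≤ t := by
    rintro C t ⟨K, u, v, hC, ht⟩
    rw [hC, hfrob_sum, ht]
    exact Finset.sum_le_sum fun k _ => hkey (u k) (v k)
  -- nonempty decomposition for any C
  have hne : ∀ C : Mat p, ∃ t : ℝ, (∃ (K : ℕ) (u v : Fin K → Vec p),
      C = ∑ k, Matrix.vecMulVec (u k) (v k) ∧ t = ∑ k, theta (s : ℝ) (u k) (v k)) := by
    intro C
    refine ⟨∑ k, theta (s : ℝ) (fun i => if i = k then (1:ℝ) else 0) (C k), p,
      fun k i => if i = k then 1 else 0, fun k => C k, ?_, rfl⟩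
    ext i j
    simp [Matrix.sum_apply, Matrix.vecMulVec_apply, ite_mul]
  have hWC : ∀ C : Mat p, frob W C ≤ mixedNorm (s : ℝ) C := by
    intro C
    exact le_csInf (hne C) fun t ht => hlow C t ht
  have hBle : mixedNorm (s : ℝ) (Matrix.vecMulVec β β) ≤ theta (s : ℝ) β β := by
    apply csInf_le
    · exact ⟨frob W (Matrix.vecMulVec β β), fun t ht => hlow _ t ht⟩
    · exact ⟨1, fun _ => β, fun _ => β, by simp, by simp⟩
  have hfrobB : frob W (Matrix.vecMulVec β β) = theta (s : ℝ) β β := by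
    rw [hfrob1, hdotβ, theta]
  refine ⟨?_, ?_, ?_⟩
  · rw [hdot, hdotβ]; rfl
  · intro u v
    rw [hdot]
    exact hkey u v
  · intro C
    have hsub : frob W (C - Matrix.vecMulVec β β)
        = frob W C - frob W (Matrix.vecMulVec β β) := by
      simp only [frob, Matrix.sub_apply, mul_sub, Finset.sum_sub_distrib]
    rw [hsub, hfrobB]
    have := hWC C
    linarith [hBle]
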